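/- Let q be an invertible element of ℂ[[ħ]]. The bilinear map φ on the Lie algebra of matrix q-difference operators defined by φ(M₁ ⊗ D^k Z^l, M₂ ⊗ D^{k'} Z^{-l'}) = tr(M₁M₂) · q^{-lk'} · (1-q^{l(k+k')})/(1-q^{k+k'}) if l = l' and 0 otherwise (where (1-q^{l(k+k')})/(1-q^{k+k'}) denotes the evaluation of ∑_{i=0}^{l-1} x^i at x = q^{k+k'} when l ≥ 0, extended anti-symmetrically) satisfies the 2-cocycle condition: φ([a,b],c) + φ([b,c],a) + φ([c,a],b) = 0 for basis elements a = M₁⊗D^{k₁}Z^{l₁}, b = M₂⊗D^{k₂}Z^{l₂}, c = M₃⊗D^{k₃}Z^{l₃} of the algebra 𝔡^{(n)}_q = M_n ⊗ 𝔡_q. -/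

import Mathlib

open Matrix

noncomputable def geomZ {R : Type*} [CommRing R] (x : Rˣ) (l : ℤ) : R :=
  if 0 ≤ l then ∑ i ∈ Finset.range l.toNat, ((x : R)) ^ i
  else -(((x ^ l : Rˣ) : R) * ∑ i ∈ Finset.range (-l).toNat, ((x : R)) ^ i)

lemma val_zpow_toNat {R : Type*} [CommRing R] (x : Rˣ) {l : ℤ} (h : 0 ≤ l) :
    ((x ^ l : Rˣ) : R) = (x : R) ^ l.toNat := by
  conv_lhs => rw [← Int.toNat_of_nonneg h]
  rw [zpow_natCast, Units.val_pow_eq_pow_val]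

lemma geomZ_zero {R : Type*} [CommRing R] (x : Rˣ) : geomZ x 0 = 0 := by
  simp [geomZ]

lemma geomZ_add_one {R : Type*} [CommRing R] (x : Rˣ) (l : ℤ) :
    geomZ x (l + 1) = geomZ x l + ((x ^ l : Rˣ) : R) := by
  rcases le_or_gt 0 l with h | h
  · rw [geomZ, geomZ, if_pos (by omega), if_pos h]
    have : (l + 1).toNat = l.toNat + 1 := by omega
    rw [this, Finset.sum_range_succ, val_zpow_toNat x h]
  rcases eq_or_lt_of_le (by omega : l + 1 ≤ 0) with h0 | h0
  · have : l = -1 := by omega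
    subst this
    norm_num [geomZ]
  · rw [geomZ, geomZ, if_neg (by omega), if_neg (by omega)]
    have : (-l).toNat = (-(l+1)).toNat + 1 := by omega
    rw [this, geom_sum_succ]
    have hx : ((x ^ l : Rˣ) : R) * (x : R) = ((x ^ (l+1) : Rˣ) : R) := by
      rw [← Units.val_mul, ← _root_.zpow_add_one]
    linear_combination (∑ i ∈ Finset.range (-(l+1)).toNat, ((x:R))^i) * hx

lemma geomZ_add {R : Type*} [CommRing R] (x : Rˣ) (a b : ℤ) :
    geomZ x (a + b) = geomZ x a + ((x ^ a : Rˣ) : R) * geomZ x b := by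
  induction b using Int.induction_on with
  | zero => simp [geomZ_zero]
  | succ b ih =>
      have : a + ((b : ℤ) + 1) = (a + b) + 1 := by ring
      rw [this, geomZ_add_one, ih, geomZ_add_one]
      have : ((x ^ (a + (b:ℤ)) : Rˣ) : R) = ((x ^ a : Rˣ) : R) * ((x ^ (b:ℤ) : Rˣ) : R) := by
        rw [← Units.val_mul, ← _root_.zpow_add]
      rw [this]; ring
  | pred b ih =>
      have h1 : a + (-(b:ℤ) - 1) + 1 = a + -(b:ℤ) := by ring
      have h2 : (-(b:ℤ) - 1) + 1 = -(b:ℤ) := by ring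
      have e1 := geomZ_add_one x (a + (-(b:ℤ) - 1))
      have e2 := geomZ_add_one x (-(b:ℤ) - 1)
      rw [h1] at e1; rw [h2] at e2
      have hx : ((x ^ (a + (-(b:ℤ) - 1)) : Rˣ) : R)
          = ((x ^ a : Rˣ) : R) * ((x ^ (-(b:ℤ) - 1) : Rˣ) : R) := by
        rw [← Units.val_mul, ← _root_.zpow_add]
      rw [ih] at e1
      linear_combination (-1 : R) * e1 + ((x ^ a : Rˣ) : R) * e2 - hx

lemma geomZ_neg {R : Type*} [CommRing R] (x : Rˣ) (l : ℤ) :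
    geomZ x (-l) = -(((x ^ (-l) : Rˣ) : R) * geomZ x l) := by
  have := geomZ_add x (-l) l
  rw [neg_add_cancel, geomZ_zero] at this
  linear_combination -this

/-- The scalar `(1-q^{l(k+k')})/(1-q^{k+k'})`-type factor entering the 2-cocycle on matrix
`q`-difference operators: for `l ≥ 0` it is `q^{-lk'} · (∑_{i<l} (q^{k+k'})^i)` (the evaluation of
`(1-x^l)/(1-x)` at `x = q^{k+k'}`), and it is extended anti-symmetrically to `l < 0`. -/
noncomputable def cocFactor {R : Type*} [CommRing R] (q : Rˣ) (k k' l : ℤ) : R :=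
  if 0 ≤ l then
    ((q ^ (-(l * k')) : Rˣ) : R) * ∑ i ∈ Finset.range l.toNat, (((q ^ (k + k') : Rˣ) : R)) ^ i
  else
    -(((q ^ (l * k) : Rˣ) : R) * ∑ i ∈ Finset.range (-l).toNat, (((q ^ (k + k') : Rˣ) : R)) ^ i)

lemma cocFactor_eq {R : Type*} [CommRing R] (q : Rˣ) (k k' l : ℤ) :
    cocFactor q k k' l = ((q ^ (-(l * k')) : Rˣ) : R) * geomZ (q ^ (k + k')) l := by
  rcases le_or_gt 0 l with h | h
  · rw [cocFactor, geomZ, if_pos h, if_pos h]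
  · rw [cocFactor, geomZ, if_neg (by omega), if_neg (by omega)]
    have hx : ((q ^ (-(l * k')) : Rˣ) : R) * (((q ^ (k + k')) ^ l : Rˣ) : R)
        = ((q ^ (l * k) : Rˣ) : R) := by
      rw [← Units.val_mul, ← _root_.zpow_mul, ← _root_.zpow_add]
      congr 1
      ring
    linear_combination (∑ i ∈ Finset.range (-l).toNat, (((q ^ (k + k') : Rˣ) : R)) ^ i) * hx


/-- The 2-cocycle `φ` on `𝔡^{(n)}_q = M_n ⊗ 𝔡_q`, evaluated on basis elements
`M₁ ⊗ D^{k₁} Z^{l₁}` and `M₂ ⊗ D^{k₂} Z^{l₂}`: it vanishes unless `l₁ + l₂ = 0`, and equals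
`tr(M₁M₂)·q^{-l₁k₂}·(1-q^{l₁(k₁+k₂)})/(1-q^{k₁+k₂})` otherwise. -/
noncomputable def phiQ {R : Type*} [CommRing R] (q : Rˣ) (n : ℕ)
    (M₁ : Matrix (Fin n) (Fin n) R) (k₁ l₁ : ℤ)
    (M₂ : Matrix (Fin n) (Fin n) R) (k₂ l₂ : ℤ) : R :=
  if l₁ + l₂ = 0 then (M₁ * M₂).trace * cocFactor q k₁ k₂ l₁ else 0

/-- `φ([a,b], c)` for basis elements `a = M₁⊗D^{k₁}Z^{l₁}`, `b = M₂⊗D^{k₂}Z^{l₂}`,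
`c = M₃⊗D^{k₃}Z^{l₃}`, using the multiplication rule
`(D^{k₁}Z^{l₁})(D^{k₂}Z^{l₂}) = q^{-k₂l₁} D^{k₁+k₂} Z^{l₁+l₂}` in `𝔡_q` (from `DZ = qZD`). -/
noncomputable def phiBr {R : Type*} [CommRing R] (q : Rˣ) (n : ℕ)
    (M₁ : Matrix (Fin n) (Fin n) R) (k₁ l₁ : ℤ)
    (M₂ : Matrix (Fin n) (Fin n) R) (k₂ l₂ : ℤ)
    (M₃ : Matrix (Fin n) (Fin n) R) (k₃ l₃ : ℤ) : R :=
  ((q ^ (-(k₂ * l₁)) : Rˣ) : R) * phiQ q n (M₁ * M₂) (k₁ + k₂) (l₁ + l₂) M₃ k₃ l₃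
    - ((q ^ (-(k₁ * l₂)) : Rˣ) : R) * phiQ q n (M₂ * M₁) (k₁ + k₂) (l₁ + l₂) M₃ k₃ l₃

/-- The bilinear form `φ` on `𝔡^{(n)}_q = M_n ⊗ 𝔡_q` satisfies the 2-cocycle
condition `φ([a,b],c) + φ([b,c],a) + φ([c,a],b) = 0` on basis elements. -/
theorem stmt9 (R : Type*) [CommRing R] (q : Rˣ) (n : ℕ)
    (M₁ M₂ M₃ : Matrix (Fin n) (Fin n) R) (k₁ l₁ k₂ l₂ k₃ l₃ : ℤ) :
    phiBr q n M₁ k₁ l₁ M₂ k₂ l₂ M₃ k₃ l₃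
      + phiBr q n M₂ k₂ l₂ M₃ k₃ l₃ M₁ k₁ l₁
      + phiBr q n M₃ k₃ l₃ M₁ k₁ l₁ M₂ k₂ l₂ = 0 := by
  simp only [phiBr, phiQ]
  by_cases h : l₁ + l₂ + l₃ = 0
  · obtain rfl : l₃ = -l₁ - l₂ := by omega
    simp only [if_pos (show l₁ + l₂ + (-l₁ - l₂) = 0 by ring),
        if_pos (show l₂ + (-l₁ - l₂) + l₁ = 0 by ring),
        if_pos (show -l₁ - l₂ + l₁ + l₂ = 0 by ring)]
    rw [show l₂ + (-l₁ - l₂) = -l₁ from by ring, show -l₁ - l₂ + l₁ = -l₂ from by ring]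
    simp only [cocFactor_eq]
    rw [show k₂ + k₃ + k₁ = k₁ + k₂ + k₃ from by ring,
        show k₃ + k₁ + k₂ = k₁ + k₂ + k₃ from by ring]
    rw [geomZ_neg, geomZ_neg]
    rw [Matrix.trace_mul_cycle M₃ M₁ M₂, Matrix.trace_mul_cycle M₂ M₃ M₁,
        Matrix.trace_mul_cycle M₃ M₂ M₁, Matrix.trace_mul_cycle M₁ M₃ M₂]
    have key : ∀ a b : ℤ, a = b → ((q ^ a : Rˣ) : R) = ((q ^ b : Rˣ) : R) :=
      fun a b hab => by rw [hab]
    have hw1 := geomZ_add (q ^ (k₁ + k₂ + k₃)) l₁ l₂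
    have hw2 := geomZ_add (q ^ (k₁ + k₂ + k₃)) l₂ l₁
    rw [show l₂ + l₁ = l₁ + l₂ from by ring] at hw2
    simp only [← _root_.zpow_mul] at hw1 hw2 ⊢
    set t := (M₁ * M₂ * M₃).trace
    set s := (M₂ * M₁ * M₃).trace
    set u := geomZ (q ^ (k₁ + k₂ + k₃)) l₁
    set v := geomZ (q ^ (k₁ + k₂ + k₃)) l₂
    have h1 : ((q ^ (-(k₂ * l₁)) : Rˣ) : R) * ((q ^ (-((l₁ + l₂) * k₃)) : Rˣ) : R)
        = ((q ^ (-(k₃ * l₂)) : Rˣ) : R) * ((q ^ (-(-l₁ * k₁)) : Rˣ) : R)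
          * ((q ^ ((k₁ + k₂ + k₃) * (-l₁)) : Rˣ) : R) := by
      simp only [← Units.val_mul, ← _root_.zpow_add]; exact key _ _ (by ring)
    have h2 : ((q ^ (-(k₂ * l₁)) : Rˣ) : R) * ((q ^ (-((l₁ + l₂) * k₃)) : Rˣ) : R)
          * ((q ^ ((k₁ + k₂ + k₃) * l₁) : Rˣ) : R)
        = ((q ^ (-(k₁ * (-l₁ - l₂))) : Rˣ) : R) * ((q ^ (-(-l₂ * k₂)) : Rˣ) : R)
          * ((q ^ ((k₁ + k₂ + k₃) * (-l₂)) : Rˣ) : R) := by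
      simp only [← Units.val_mul, ← _root_.zpow_add]; exact key _ _ (by ring)
    have h3 : ((q ^ (-(k₁ * l₂)) : Rˣ) : R) * ((q ^ (-((l₁ + l₂) * k₃)) : Rˣ) : R)
          * ((q ^ ((k₁ + k₂ + k₃) * l₂) : Rˣ) : R)
        = ((q ^ (-(k₂ * (-l₁ - l₂))) : Rˣ) : R) * ((q ^ (-(-l₁ * k₁)) : Rˣ) : R)
          * ((q ^ ((k₁ + k₂ + k₃) * (-l₁)) : Rˣ) : R) := by
      simp only [← Units.val_mul, ← _root_.zpow_add]; exact key _ _ (by ring)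
    have h4 : ((q ^ (-(k₁ * l₂)) : Rˣ) : R) * ((q ^ (-((l₁ + l₂) * k₃)) : Rˣ) : R)
        = ((q ^ (-(k₃ * l₁)) : Rˣ) : R) * ((q ^ (-(-l₂ * k₂)) : Rˣ) : R)
          * ((q ^ ((k₁ + k₂ + k₃) * (-l₂)) : Rˣ) : R) := by
      simp only [← Units.val_mul, ← _root_.zpow_add]; exact key _ _ (by ring)
    linear_combination
      t * (((q ^ (-(k₂ * l₁)) : Rˣ) : R) * ((q ^ (-((l₁ + l₂) * k₃)) : Rˣ) : R)) * hw1
        + t * u * h1 + t * v * h2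
        - s * (((q ^ (-(k₁ * l₂)) : Rˣ) : R) * ((q ^ (-((l₁ + l₂) * k₃)) : Rˣ) : R)) * hw2
        - s * u * h3 - s * v * h4
  · simp only [if_neg (show ¬(l₁ + l₂ + l₃ = 0) from h),
        if_neg (show ¬(l₂ + l₃ + l₁ = 0) from by omega),
        if_neg (show ¬(l₃ + l₁ + l₂ = 0) from by omega)]
    ring
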